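/- Let y : [0,1] → ℝ be three times differentiable with |y'''(t)| ≤ ξ₁ for all t ∈ [0,1], and for integers j ≥ 0 and 0 ≤ k ≤ 2^j − 1 define the Haar coefficients a_{2^j+k+1} = 2^j ∫₀¹ y''(t) h_{2^j+k+1}(t) dt. Then for every integer J ≥ 0, the truncation error function E_{M1}(t) = Σ_{j=J+1}^∞ Σ_{k=0}^{2^j−1} a_{2^j+k+1} p_{2,2^j+k+1}(t) satisfies the L²([0,1]) bound ‖E_{M1}‖₂ ≤ (ξ₁/6)·(2^{−(J+1)})². -/

import Mathlib

open MeasureTheory Real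
open Set

/-- Left endpoint of the support of the Haar wavelet indexed by `(j, k)`. -/
noncomputable def eta1 (j k : ℕ) : ℝ := (k : ℝ) / 2 ^ j

/-- Midpoint of the support of the Haar wavelet indexed by `(j, k)`. -/
noncomputable def eta2 (j k : ℕ) : ℝ := (2 * (k : ℝ) + 1) / 2 ^ (j + 1)

/-- Right endpoint of the support of the Haar wavelet indexed by `(j, k)`. -/
noncomputable def eta3 (j k : ℕ) : ℝ := ((k : ℝ) + 1) / 2 ^ j

/-- The Haar wavelet `h_i` with `i = 2^j + k + 1`: equals `1` on `[η₁, η₂)`,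
`-1` on `[η₂, η₃)` and `0` elsewhere. -/
noncomputable def haarJK (j k : ℕ) (t : ℝ) : ℝ :=
  if eta1 j k ≤ t ∧ t < eta2 j k then 1
  else if eta2 j k ≤ t ∧ t < eta3 j k then -1
  else 0

/-- `p_{2,i}(t) = ∫₀ᵗ (t - s) h_i(s) ds` where `i = 2^j + k + 1`. -/
noncomputable def p2JK (j k : ℕ) (t : ℝ) : ℝ := ∫ s in (0:ℝ)..t, (t - s) * haarJK j k s

/-- The Haar coefficient `2^j ∫₀¹ f(t) h_{2^j+k+1}(t) dt` of a function `f`. -/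
noncomputable def haarCoeff (f : ℝ → ℝ) (j k : ℕ) : ℝ :=
  2 ^ j * ∫ t in (0:ℝ)..1, f t * haarJK j k t

/-- Truncation error of the Haar expansion at resolution `J`:
`Σ_{j=J+1}^∞ Σ_{k=0}^{2^j-1} c_{j,k} p_{2,2^j+k+1}(t)` (here the outer sum is
reindexed by `j = J + 1 + m`). -/
noncomputable def truncErr (c : ℕ → ℕ → ℝ) (J : ℕ) (t : ℝ) : ℝ :=
  ∑' m : ℕ, ∑ k ∈ Finset.range (2 ^ (J + 1 + m)), c (J + 1 + m) k * p2JK (J + 1 + m) k t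

/-- The `L²([0,1])` norm of a function. -/
noncomputable def L2norm (f : ℝ → ℝ) : ℝ := Real.sqrt (∫ t in (0:ℝ)..1, f t ^ 2)

lemma eta2_eq (j k : ℕ) : eta2 j k = eta1 j k + 1 / 2 ^ (j+1) := by
  simp only [eta1, eta2, pow_succ]; field_simp

lemma eta3_eq (j k : ℕ) : eta3 j k = eta2 j k + 1 / 2 ^ (j+1) := by
  simp only [eta2, eta3, pow_succ]; field_simp; ring

lemma two_pow_pos (n : ℕ) : (0:ℝ) < 1 / 2 ^ n := by positivity

lemma eta1_nonneg (j k : ℕ) : 0 ≤ eta1 j k := by unfold eta1; positivity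

lemma eta12 (j k : ℕ) : eta1 j k < eta2 j k := by
  rw [eta2_eq]; linarith [two_pow_pos (j+1)]

lemma eta23 (j k : ℕ) : eta2 j k < eta3 j k := by
  rw [eta3_eq]; linarith [two_pow_pos (j+1)]

lemma eta31 (j k : ℕ) : eta3 j k - eta1 j k = 1 / 2 ^ j := by
  rw [eta3_eq, eta2_eq, pow_succ]; field_simp; ring

lemma eta3_le_one (j k : ℕ) (hk : k < 2 ^ j) : eta3 j k ≤ 1 := by
  rw [eta3, div_le_one (by positivity)]
  have : (k:ℝ) + 1 ≤ (2:ℝ)^j := by exact_mod_cast Nat.succ_le_of_lt hk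
  simpa using this

lemma haar_eq_zero_left {j k : ℕ} {t : ℝ} (h : t < eta1 j k) : haarJK j k t = 0 := by
  have h2 : t < eta2 j k := h.trans (eta12 j k)
  simp [haarJK, not_le.mpr h, not_le.mpr h2, h.not_ge]

lemma haar_eq_zero_right {j k : ℕ} {t : ℝ} (h : eta3 j k ≤ t) : haarJK j k t = 0 := by
  have h2 : eta2 j k ≤ t := ((eta23 j k).le).trans h
  simp [haarJK, not_lt.mpr (h2.trans' (eta12 j k).le), not_lt.mpr h, h2]

lemma abs_haar_le_one (j k : ℕ) (t : ℝ) : |haarJK j k t| ≤ 1 := by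
  unfold haarJK; split_ifs <;> norm_num

lemma haar_eq_indicator (j k : ℕ) : haarJK j k = fun t =>
    (Ico (eta1 j k) (eta2 j k)).indicator (fun _ => (1:ℝ)) t
      + (Ico (eta2 j k) (eta3 j k)).indicator (fun _ => (-1:ℝ)) t := by
  funext t
  unfold haarJK
  by_cases h1 : eta1 j k ≤ t ∧ t < eta2 j k
  · have : t ∉ Ico (eta2 j k) (eta3 j k) := by
      simp [mem_Ico]; intro hle; exact absurd hle (not_le.mpr h1.2)
    simp [h1, indicator_of_notMem this, mem_Ico.mpr h1]
  · by_cases h2 : eta2 j k ≤ t ∧ t < eta3 j k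
    · have : t ∉ Ico (eta1 j k) (eta2 j k) := by
        simp [mem_Ico]; intro _; exact h2.1
      simp [h1, h2, indicator_of_notMem this, mem_Ico.mpr h2]
    · have n1 : t ∉ Ico (eta1 j k) (eta2 j k) := by simpa [mem_Ico] using h1
      have n2 : t ∉ Ico (eta2 j k) (eta3 j k) := by simpa [mem_Ico] using h2
      simp [h1, h2, indicator_of_notMem n1, indicator_of_notMem n2]

lemma measurable_haar (j k : ℕ) : Measurable (haarJK j k) := by
  rw [haar_eq_indicator]
  exact ((measurable_const.indicator measurableSet_Ico).add
    (measurable_const.indicator measurableSet_Ico))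

lemma intervalIntegrable_mul_haar {f : ℝ → ℝ} (hf : Continuous f) (j k : ℕ) (u v : ℝ) :
    IntervalIntegrable (fun s => f s * haarJK j k s) volume u v := by
  have hb : ∀ s, ‖haarJK j k s‖ ≤ 1 := fun s => by
    simpa using abs_haar_le_one j k s
  have he : (fun s => f s * haarJK j k s) = fun s => haarJK j k s * f s := by
    funext s; ring
  rw [he]
  constructor <;>
  · exact MeasureTheory.Integrable.bdd_mul (hf.integrableOn_Ioc)
      (measurable_haar j k).aestronglyMeasurable (c := 1) (ae_of_all _ hb)

lemma integral_eq_zero_of_zero_on_Ioo {f : ℝ → ℝ} {u v : ℝ}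
    (h : ∀ s ∈ Ioo (min u v) (max u v), f s = 0) : ∫ s in u..v, f s = 0 := by
  rcases le_total u v with huv | huv
  · rw [intervalIntegral.integral_of_le huv, MeasureTheory.integral_Ioc_eq_integral_Ioo]
    rw [min_eq_left huv, max_eq_right huv] at h
    rw [MeasureTheory.setIntegral_congr_fun measurableSet_Ioo h]
    simp
  · rw [intervalIntegral.integral_of_ge huv, MeasureTheory.integral_Ioc_eq_integral_Ioo]
    rw [min_eq_right huv, max_eq_left huv] at h
    rw [MeasureTheory.setIntegral_congr_fun measurableSet_Ioo h]
    simp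

lemma integral_congr_on_Ioo {f g : ℝ → ℝ} {u v : ℝ} (huv : u ≤ v)
    (h : ∀ s ∈ Ioo u v, f s = g s) :
    ∫ s in u..v, f s = ∫ s in u..v, g s := by
  rw [intervalIntegral.integral_of_le huv, intervalIntegral.integral_of_le huv,
    MeasureTheory.integral_Ioc_eq_integral_Ioo, MeasureTheory.integral_Ioc_eq_integral_Ioo]
  exact MeasureTheory.setIntegral_congr_fun measurableSet_Ioo h

lemma intervalIntegrable_haar (j k : ℕ) (u v : ℝ) :
    IntervalIntegrable (haarJK j k) volume u v := by
  have := intervalIntegrable_mul_haar (f := fun _ => (1:ℝ)) continuous_const j k u v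
  simpa using this

lemma haar_one {j k : ℕ} {s : ℝ} (hs : s ∈ Ioo (eta1 j k) (eta2 j k)) : haarJK j k s = 1 := by
  simp [haarJK, hs.1.le, hs.2]

lemma haar_neg_one {j k : ℕ} {s : ℝ} (hs : s ∈ Ioo (eta2 j k) (eta3 j k)) :
    haarJK j k s = -1 := by
  simp [haarJK, hs.1.le, hs.2, not_lt.mpr hs.1.le]

lemma integral_haar (j k : ℕ) :
    ∫ s in (eta1 j k)..(eta3 j k), haarJK j k s = 0 := by
  rw [← intervalIntegral.integral_add_adjacent_intervals
    (intervalIntegrable_haar j k (eta1 j k) (eta2 j k))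
    (intervalIntegrable_haar j k (eta2 j k) (eta3 j k))]
  rw [show (∫ s in (eta1 j k)..(eta2 j k), haarJK j k s) = ∫ _ in (eta1 j k)..(eta2 j k), (1:ℝ)
      from integral_congr_on_Ioo (eta12 j k).le (fun s hs => haar_one hs),
    show (∫ s in (eta2 j k)..(eta3 j k), haarJK j k s) = ∫ _ in (eta2 j k)..(eta3 j k), (-1:ℝ)
      from integral_congr_on_Ioo (eta23 j k).le (fun s hs => haar_neg_one hs)]
  simp only [intervalIntegral.integral_const, smul_eq_mul]
  rw [eta2_eq, eta3_eq, eta2_eq]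
  ring

lemma integral_v_sub (u v : ℝ) : (∫ s in u..v, (v - s)) = (v - u) ^ 2 / 2 := by
  rw [intervalIntegral.integral_sub intervalIntegrable_const
    (continuous_id'.intervalIntegrable _ _)]
  simp [integral_id]
  ring

lemma integral_sub_u (u v : ℝ) : (∫ s in u..v, (s - u)) = (v - u) ^ 2 / 2 := by
  rw [intervalIntegral.integral_sub
    (continuous_id'.intervalIntegrable _ _)
    intervalIntegrable_const]
  simp [integral_id]
  ring

lemma p2_bound (j k : ℕ) (t : ℝ) : |p2JK j k t| ≤ (1 / 2 ^ j) ^ 2 / 2 := by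
  set a := eta1 j k
  set b := eta2 j k
  set c := eta3 j k
  have hL : c - a = 1 / 2 ^ j := eta31 j k
  have hL0 : (0:ℝ) < 1 / 2 ^ j := two_pow_pos j
  have ha0 : 0 ≤ a := eta1_nonneg j k
  have hii : ∀ u v t' : ℝ, IntervalIntegrable (fun s => (t' - s) * haarJK j k s) volume u v :=
    fun u v t' => intervalIntegrable_mul_haar (by continuity) j k u v
  rcases le_total t a with hta | hat
  · -- t ≤ a : integral is zero
    have : p2JK j k t = 0 := by
      apply integral_eq_zero_of_zero_on_Ioo
      intro s hs
      have hs2 : s < a := lt_of_lt_of_le hs.2 (max_le ha0 hta)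
      rw [haar_eq_zero_left hs2, mul_zero]
    rw [this, abs_zero]; positivity
  · rcases le_total t c with htc | hct
    · -- a ≤ t ≤ c
      have hsplit : p2JK j k t = ∫ s in a..t, (t - s) * haarJK j k s := by
        rw [p2JK, ← intervalIntegral.integral_add_adjacent_intervals (hii 0 a t) (hii a t t)]
        have h0 : (∫ s in (0:ℝ)..a, (t - s) * haarJK j k s) = 0 := by
          apply integral_eq_zero_of_zero_on_Ioo
          intro s hs
          rw [min_eq_left ha0, max_eq_right ha0] at hs
          rw [haar_eq_zero_left hs.2, mul_zero]
        rw [h0, zero_add]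
      rw [hsplit]
      calc |∫ s in a..t, (t - s) * haarJK j k s| ≤ |∫ s in a..t, (t - s)| := by
            refine le_trans (le_of_eq (Real.norm_eq_abs _).symm)
              (intervalIntegral.norm_integral_le_abs_of_norm_le ?_
              (((continuous_const.sub continuous_id :
                Continuous fun s : ℝ => t - s)).intervalIntegrable _ _))
            rw [MeasureTheory.ae_restrict_iff' measurableSet_uIoc]
            apply MeasureTheory.ae_of_all
            intro s hs
            rw [Set.uIoc_of_le hat] at hs
            calc ‖(t - s) * haarJK j k s‖ = |t - s| * |haarJK j k s| := by
                  rw [Real.norm_eq_abs, abs_mul]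
              _ ≤ |t - s| * 1 :=
                  mul_le_mul_of_nonneg_left (abs_haar_le_one j k s) (abs_nonneg _)
              _ = t - s := by rw [mul_one, abs_of_nonneg (sub_nonneg.mpr hs.2)]
        _ ≤ (1 / 2 ^ j) ^ 2 / 2 := by
            rw [integral_v_sub, abs_of_nonneg (by positivity)]
            have : t - a ≤ 1 / 2 ^ j := by rw [← hL]; linarith
            nlinarith [sub_nonneg.mpr hat]
    · -- c ≤ t
      have hac : a ≤ c := ((eta12 j k).trans (eta23 j k)).le
      have hsplit : p2JK j k t = ∫ s in a..c, (t - s) * haarJK j k s := by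
        rw [p2JK, ← intervalIntegral.integral_add_adjacent_intervals (hii 0 c t) (hii c t t),
          ← intervalIntegral.integral_add_adjacent_intervals (hii 0 a t) (hii a c t)]
        have h0 : (∫ s in (0:ℝ)..a, (t - s) * haarJK j k s) = 0 := by
          apply integral_eq_zero_of_zero_on_Ioo
          intro s hs
          rw [min_eq_left ha0, max_eq_right ha0] at hs
          rw [haar_eq_zero_left hs.2, mul_zero]
        have h1 : (∫ s in c..t, (t - s) * haarJK j k s) = 0 := by
          apply integral_eq_zero_of_zero_on_Ioo
          intro s hs
          rw [min_eq_left hct, max_eq_right hct] at hs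
          rw [haar_eq_zero_right hs.1.le, mul_zero]
        rw [h0, h1, zero_add, add_zero]
      have hre : p2JK j k t = ∫ s in a..c, (a - s) * haarJK j k s := by
        rw [hsplit]
        have : (∫ s in a..c, (t - s) * haarJK j k s)
            = (∫ s in a..c, (a - s) * haarJK j k s) + (t - a) * ∫ s in a..c, haarJK j k s := by
          rw [← intervalIntegral.integral_const_mul,
            ← intervalIntegral.integral_add (hii a c a)
              ((intervalIntegrable_haar j k a c).const_mul _)]
          apply intervalIntegral.integral_congr
          intro s _
          ring
        rw [this, integral_haar, mul_zero, add_zero]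
      rw [hre]
      calc |∫ s in a..c, (a - s) * haarJK j k s| ≤ |∫ s in a..c, (s - a)| := by
            refine le_trans (le_of_eq (Real.norm_eq_abs _).symm)
              (intervalIntegral.norm_integral_le_abs_of_norm_le ?_
              (((continuous_id.sub continuous_const :
                Continuous fun s : ℝ => s - a)).intervalIntegrable _ _))
            rw [MeasureTheory.ae_restrict_iff' measurableSet_uIoc]
            apply MeasureTheory.ae_of_all
            intro s hs
            rw [Set.uIoc_of_le hac] at hs
            have h1 : |(a - s) * haarJK j k s| ≤ |a - s| * 1 := by
              rw [abs_mul]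
              exact mul_le_mul_of_nonneg_left (abs_haar_le_one j k s) (abs_nonneg _)
            calc ‖(a - s) * haarJK j k s‖ ≤ |a - s| * 1 := h1
              _ = s - a := by rw [mul_one, abs_sub_comm, abs_of_nonneg (by linarith [hs.1])]
        _ ≤ (1 / 2 ^ j) ^ 2 / 2 := by
            rw [integral_sub_u, abs_of_nonneg (by positivity), hL]

lemma coeff_bound (y : ℝ → ℝ) (ξ₁ : ℝ)
    (hy' : Differentiable ℝ (deriv y)) (hy'' : Differentiable ℝ (deriv (deriv y)))
    (hb : ∀ t ∈ Set.Icc (0:ℝ) 1, |deriv (deriv (deriv y)) t| ≤ ξ₁)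
    (j k : ℕ) (hk : k < 2 ^ j) :
    |haarCoeff (deriv (deriv y)) j k| ≤ ξ₁ / (2 ^ j * 4) := by
  set a := eta1 j k
  set b := eta2 j k
  set c := eta3 j k
  set Δ : ℝ := 1 / 2 ^ (j+1) with hΔ
  have hΔ0 : (0:ℝ) < Δ := two_pow_pos (j+1)
  have hba : b = a + Δ := eta2_eq j k
  have hcb : c = b + Δ := eta3_eq j k
  have ha0 : 0 ≤ a := eta1_nonneg j k
  have hc1 : c ≤ 1 := eta3_le_one j k hk
  have hab : a ≤ b := (eta12 j k).le
  have hbc : b ≤ c := (eta23 j k).le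
  have hcont : Continuous (deriv (deriv y)) := hy''.continuous
  have hii : ∀ u v : ℝ, IntervalIntegrable
      (fun s => deriv (deriv y) s * haarJK j k s) volume u v :=
    fun u v => intervalIntegrable_mul_haar hcont j k u v
  -- the integral equals (y'(b)-y'(a)) - (y'(c)-y'(b))
  have hint : (∫ t in (0:ℝ)..1, deriv (deriv y) t * haarJK j k t)
      = (deriv y b - deriv y a) - (deriv y c - deriv y b) := by
    rw [← intervalIntegral.integral_add_adjacent_intervals (hii 0 a) (hii a 1),
      ← intervalIntegral.integral_add_adjacent_intervals (hii a b) (hii b 1),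
      ← intervalIntegral.integral_add_adjacent_intervals (hii b c) (hii c 1)]
    have h0 : (∫ s in (0:ℝ)..a, deriv (deriv y) s * haarJK j k s) = 0 := by
      apply integral_eq_zero_of_zero_on_Ioo
      intro s hs
      rw [min_eq_left ha0, max_eq_right ha0] at hs
      rw [haar_eq_zero_left hs.2, mul_zero]
    have h1 : (∫ s in c..(1:ℝ), deriv (deriv y) s * haarJK j k s) = 0 := by
      apply integral_eq_zero_of_zero_on_Ioo
      intro s hs
      rw [min_eq_left hc1, max_eq_right hc1] at hs
      rw [haar_eq_zero_right hs.1.le, mul_zero]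
    have h2 : (∫ s in a..b, deriv (deriv y) s * haarJK j k s)
        = deriv y b - deriv y a := by
      rw [integral_congr_on_Ioo hab (g := fun s => deriv (deriv y) s)
        (fun s hs => by rw [haar_one hs, mul_one])]
      exact intervalIntegral.integral_deriv_eq_sub (fun x _ => hy' x)
        (hcont.intervalIntegrable _ _)
    have h3 : (∫ s in b..c, deriv (deriv y) s * haarJK j k s)
        = -(deriv y c - deriv y b) := by
      rw [integral_congr_on_Ioo hbc (g := fun s => -(deriv (deriv y) s))
        (fun s hs => by rw [haar_neg_one hs]; ring), intervalIntegral.integral_neg]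
      rw [intervalIntegral.integral_deriv_eq_sub (fun x _ => hy' x)
        (hcont.intervalIntegrable _ _)]
    rw [h0, h1, h2, h3]
    ring
  -- Taylor-type estimate
  have hkey : |(deriv y b - deriv y a) - (deriv y c - deriv y b)| ≤ ξ₁ * Δ ^ 2 := by
    have e1 : deriv y b - deriv y a = ∫ s in a..b, deriv (deriv y) s :=
      (intervalIntegral.integral_deriv_eq_sub (fun x _ => hy' x)
        (hcont.intervalIntegrable _ _)).symm
    have e2 : deriv y c - deriv y b = ∫ s in b..c, deriv (deriv y) s :=
      (intervalIntegral.integral_deriv_eq_sub (fun x _ => hy' x)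
        (hcont.intervalIntegrable _ _)).symm
    have e3 : (∫ s in b..c, deriv (deriv y) s)
        = ∫ s in a..b, deriv (deriv y) (s + Δ) := by
      rw [intervalIntegral.integral_comp_add_right (fun s => deriv (deriv y) s) Δ,
        ← hba, ← hcb]
    have e4 : (deriv y b - deriv y a) - (deriv y c - deriv y b)
        = ∫ s in a..b, (deriv (deriv y) s - deriv (deriv y) (s + Δ)) := by
      have hi2 : IntervalIntegrable (fun s : ℝ => deriv (deriv y) (s + Δ)) volume a b :=
        (hcont.comp (by continuity)).intervalIntegrable _ _
      rw [intervalIntegral.integral_sub (hcont.intervalIntegrable _ _) hi2, e1, e2, e3]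
    rw [e4]
    have hbound : ∀ s ∈ Set.uIoc a b,
        ‖deriv (deriv y) s - deriv (deriv y) (s + Δ)‖ ≤ ξ₁ * Δ := by
      intro s hs
      rw [Set.uIoc_of_le hab] at hs
      have hs1 : s ∈ Set.Icc (0:ℝ) 1 := ⟨le_trans ha0 hs.1.le, by nlinarith [hs.2]⟩
      have hs2 : s + Δ ∈ Set.Icc (0:ℝ) 1 := ⟨by nlinarith [hs1.1], by nlinarith [hs.2]⟩
      have := Convex.norm_image_sub_le_of_norm_deriv_le (f := deriv (deriv y))
        (fun x _ => hy'' x) (fun x hx => by simpa using hb x hx)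
        (convex_Icc (0:ℝ) 1) hs2 hs1
      calc ‖deriv (deriv y) s - deriv (deriv y) (s + Δ)‖ ≤ ξ₁ * ‖s - (s + Δ)‖ := this
        _ = ξ₁ * Δ := by rw [show s - (s + Δ) = -Δ by ring, norm_neg,
            Real.norm_eq_abs, abs_of_pos hΔ0]
    have := intervalIntegral.norm_integral_le_of_norm_le_const hbound
    rw [show |b - a| = Δ by rw [hba]; rw [abs_of_pos (by linarith)]; ring] at this
    calc |∫ s in a..b, (deriv (deriv y) s - deriv (deriv y) (s + Δ))| ≤ ξ₁ * Δ * Δ := this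
      _ = ξ₁ * Δ ^ 2 := by ring
  rw [haarCoeff, hint, abs_mul, abs_of_pos (by positivity : (0:ℝ) < (2:ℝ)^j)]
  calc (2:ℝ)^j * |(deriv y b - deriv y a) - (deriv y c - deriv y b)|
      ≤ (2:ℝ)^j * (ξ₁ * Δ^2) := by
        exact mul_le_mul_of_nonneg_left hkey (by positivity)
    _ = ξ₁ / (2^j * 4) := by
        rw [hΔ]
        field_simp
        ring


/-- the `L²` bound `‖E_{M1}‖₂ ≤ (ξ₁/6)·(2^{-(J+1)})²` on the
truncation error of the Haar expansion of `y''`, for `|y'''| ≤ ξ₁`. -/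
theorem truncation_error_bound_ivp (y : ℝ → ℝ) (ξ₁ : ℝ)
    (hy : Differentiable ℝ y) (hy' : Differentiable ℝ (deriv y))
    (hy'' : Differentiable ℝ (deriv (deriv y)))
    (hb : ∀ t ∈ Set.Icc (0:ℝ) 1, |deriv (deriv (deriv y)) t| ≤ ξ₁)
    (J : ℕ) :
    L2norm (truncErr (haarCoeff (deriv (deriv y))) J) ≤
      ξ₁ / 6 * (1 / 2 ^ (J + 1)) ^ 2 := by
  set R : ℝ := ξ₁ / 6 * (1 / 2 ^ (J + 1)) ^ 2 with hR
  have hξ : 0 ≤ ξ₁ := le_trans (abs_nonneg _) (hb 0 (by norm_num))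
  have hR0 : 0 ≤ R := by positivity
  -- level bound
  have hlevel : ∀ (j : ℕ) (t : ℝ),
      |∑ k ∈ Finset.range (2 ^ j), haarCoeff (deriv (deriv y)) j k * p2JK j k t|
        ≤ ξ₁ / 8 * (1 / 4) ^ j := by
    intro j t
    calc |∑ k ∈ Finset.range (2 ^ j), haarCoeff (deriv (deriv y)) j k * p2JK j k t|
        ≤ ∑ k ∈ Finset.range (2 ^ j), |haarCoeff (deriv (deriv y)) j k * p2JK j k t| :=
          Finset.abs_sum_le_sum_abs _ _
      _ ≤ ∑ k ∈ Finset.range (2 ^ j), (ξ₁ / (2 ^ j * 4) * ((1 / 2 ^ j) ^ 2 / 2)) := by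
          apply Finset.sum_le_sum
          intro k hk
          rw [abs_mul]
          apply mul_le_mul (coeff_bound y ξ₁ hy' hy'' hb j k (Finset.mem_range.mp hk))
            (p2_bound j k t) (abs_nonneg _) (by positivity)
      _ = ξ₁ / 8 * (1 / 4) ^ j := by
          rw [Finset.sum_const, Finset.card_range, nsmul_eq_mul, Nat.cast_pow]
          have h4 : ((4:ℝ)) ^ j = (2:ℝ) ^ j * 2 ^ j := by
            rw [show (4:ℝ) = 2 * 2 by norm_num, mul_pow]
          field_simp
          rw [Nat.cast_ofNat, one_div_pow, h4]; field_simp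
          ring
  -- pointwise bound on the truncation error
  have hpt : ∀ t : ℝ, |truncErr (haarCoeff (deriv (deriv y))) J t| ≤ R := by
    intro t
    have hg : HasSum (fun m : ℕ => (ξ₁ / 8 * (1 / 4) ^ (J + 1)) * (1 / 4) ^ m)
        ((ξ₁ / 8 * (1 / 4) ^ (J + 1)) * (1 - 1 / 4)⁻¹) :=
      (hasSum_geometric_of_lt_one (by norm_num) (by norm_num)).mul_left _
    have hbd : ∀ m : ℕ,
        ‖∑ k ∈ Finset.range (2 ^ (J + 1 + m)),
            haarCoeff (deriv (deriv y)) (J + 1 + m) k * p2JK (J + 1 + m) k t‖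
          ≤ (ξ₁ / 8 * (1 / 4) ^ (J + 1)) * (1 / 4) ^ m := by
      intro m
      rw [Real.norm_eq_abs]
      calc _ ≤ ξ₁ / 8 * (1 / 4) ^ (J + 1 + m) := hlevel (J + 1 + m) t
        _ = (ξ₁ / 8 * (1 / 4) ^ (J + 1)) * (1 / 4) ^ m := by rw [pow_add]; ring
    have := tsum_of_norm_bounded hg hbd
    rw [Real.norm_eq_abs] at this
    refine le_trans this (le_of_eq ?_)
    rw [hR]
    have h4 : ((1:ℝ) / 4) ^ (J + 1) = ((1:ℝ) / 2 ^ (J + 1)) ^ 2 := by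
      have h5 : (4:ℝ) ^ (J+1) = ((2:ℝ) ^ (J+1)) ^ 2 := by
        rw [sq, ← mul_pow]; norm_num
      rw [div_pow, one_pow, div_pow, one_pow, h5]
    rw [h4]
    ring
  -- from pointwise bound to L² bound
  have hsq : ∀ x ∈ Set.uIoc (0:ℝ) 1,
      ‖truncErr (haarCoeff (deriv (deriv y))) J x ^ 2‖ ≤ R ^ 2 := by
    intro x _
    rw [Real.norm_eq_abs, abs_pow]
    exact pow_le_pow_left₀ (abs_nonneg _) (hpt x) 2
  have hint : (∫ t in (0:ℝ)..1, truncErr (haarCoeff (deriv (deriv y))) J t ^ 2) ≤ R ^ 2 := by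
    have := intervalIntegral.norm_integral_le_of_norm_le_const hsq
    simp only [sub_zero, abs_one, mul_one] at this
    exact le_trans (le_abs_self _) ((Real.norm_eq_abs _ ▸ this))
  rw [L2norm]
  calc Real.sqrt (∫ t in (0:ℝ)..1, truncErr (haarCoeff (deriv (deriv y))) J t ^ 2)
      ≤ Real.sqrt (R ^ 2) := Real.sqrt_le_sqrt hint
    _ = R := by rw [Real.sqrt_sq hR0]
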